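/- Let p be an odd prime, q_1 square-free, s, z complex with Re(s) > 1/2 and Re(z) > 1, and a(p^k) complex numbers bounded by 2^M. Using the Gauss sum bounds |G(χ_{p^k}, q_1 p^{2l})| ≤ p^k and G(χ_{p^k}, q_1 p^{2l}) = 0 for k ≥ 2l + 3, the tail sum satisfies |Σ_{k ≥ 0, l ≥ 1} a(p^k) G(χ_{p^k}, q_1 p^{2l}) p^{-kz - 2ls}| ≪_M |p^{-2s}| + |p^{-2s - z + 1}|, where the implied constant depends only on M. -/

import Mathlib

/-- tail bound for the local double sum. With `G k l = G(χ_{p^k}, q₁ p^{2l})`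
satisfying `|G k l| ≤ p^k` and `G k l = 0` for `k ≥ 2l + 3`, and `|a(p^k)| ≤ 2^M`, one has
`|∑_{k ≥ 0, l ≥ 1} a(p^k) G k l p^{-kz - 2ls}| ≪_M |p^{-2s}| + |p^{-2s - z + 1}|`, the
implied constant depending only on `M`. -/
theorem stmt19 (M : ℕ) :
    ∃ C : ℝ, 0 < C ∧
      ∀ (p : ℕ), p.Prime → Odd p →
      ∀ (q1 : ℕ), Squarefree q1 →
      ∀ (s z : ℂ), 1 / 2 < s.re → 1 < z.re →
      ∀ (a : ℕ → ℂ), (∀ k : ℕ, ‖a k‖ ≤ 2 ^ M) →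
      ∀ (G : ℕ → ℕ → ℂ), (∀ k l : ℕ, ‖G k l‖ ≤ (p : ℝ) ^ k) →
        (∀ k l : ℕ, 2 * l + 3 ≤ k → G k l = 0) →
      ‖∑' kl : ℕ × ℕ, a kl.1 * G kl.1 (kl.2 + 1) *
          (p : ℂ) ^ (-(kl.1 : ℂ) * z - 2 * ((kl.2 : ℂ) + 1) * s)‖ ≤
        C * (‖(p : ℂ) ^ (-2 * s)‖ + ‖(p : ℂ) ^ (-2 * s - z + 1)‖) := by
  refine ⟨2 ^ M * 9, by positivity, ?_⟩
  intro p hp hodd q1 hq1 s z hs hz a ha G hG hG0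
  have hp3 : (3:ℝ) ≤ (p:ℝ) := by
    have h2 : 2 ≤ p := hp.two_le
    have : p ≠ 2 := by rintro rfl; exact (Nat.not_odd_iff_even.mpr (by decide)) hodd
    have : 3 ≤ p := by omega
    exact_mod_cast this
  have hp0 : (0:ℝ) < p := by linarith
  have hp1 : (1:ℝ) < p := by linarith
  set σ := s.re with hσ
  set τ := z.re with hτ
  set X := ‖(p:ℂ) ^ (-2 * s)‖ with hX
  set Y := ‖(p:ℂ) ^ (-2 * s - z + 1)‖ with hY
  set A := (p:ℝ) ^ (-2 * σ) with hA
  set B := (p:ℝ) ^ (1 - τ) with hB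
  have hA0 : 0 < A := Real.rpow_pos_of_pos hp0 _
  have hB0 : 0 < B := Real.rpow_pos_of_pos hp0 _
  have hA3 : A ≤ 1/3 := by
    have h1 : A ≤ (p:ℝ) ^ (-1 : ℝ) :=
      Real.rpow_le_rpow_of_exponent_le hp1.le (by simp only [hσ]; linarith)
    have h2 : (p:ℝ) ^ (-1 : ℝ) = ((p:ℝ))⁻¹ := by rw [Real.rpow_neg_one]
    have h3 : ((p:ℝ))⁻¹ ≤ 1/3 := by
      rw [inv_le_comm₀ hp0 (by norm_num)]
      linarith
    linarith [h1, h2 ▸ h1]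
  have hB1 : B ≤ 1 := Real.rpow_le_one_of_one_le_of_nonpos hp1.le (by simp only [hτ]; linarith)
  have hXA : X = A := by
    rw [hX, Complex.norm_natCast_cpow_of_pos hp.pos, hA]
    norm_num
    rfl
  have hYAB : Y = A * B := by
    rw [hY, Complex.norm_natCast_cpow_of_pos hp.pos, hA, hB, ← Real.rpow_add hp0]
    congr 1
    simp [Complex.sub_re, Complex.add_re, Complex.mul_re]
    ring
  have hX0 : 0 ≤ X := norm_nonneg _
  have hY0 : 0 ≤ Y := norm_nonneg _
  -- the majorant
  set u : ℕ × ℕ → ℝ := fun kl => (if kl.1 ≤ 2 * kl.2 + 4 then (1:ℝ) else 0) * (1/3) ^ kl.2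
    with hu
  have hu0 : ∀ kl, 0 ≤ u kl := by
    intro kl
    rw [hu]
    positivity
  set F : ℕ × ℕ → ℂ := fun kl => a kl.1 * G kl.1 (kl.2 + 1) *
      (p : ℂ) ^ (-(kl.1 : ℂ) * z - 2 * ((kl.2 : ℂ) + 1) * s) with hF
  -- norm of the power factor
  have hpow : ∀ k l : ℕ, (p:ℝ) ^ k *
      ‖(p : ℂ) ^ (-(k : ℂ) * z - 2 * ((l : ℂ) + 1) * s)‖ = B ^ k * (A * A ^ l) := by
    intro k l
    rw [Complex.norm_natCast_cpow_of_pos hp.pos]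
    have hre : (-(k : ℂ) * z - 2 * ((l : ℂ) + 1) * s).re
        = (k:ℝ) * (-τ) + ((-2 * σ) + (l:ℝ) * (-2 * σ)) := by
      simp [Complex.sub_re, Complex.add_re, Complex.mul_re]
      ring
    rw [hre, Real.rpow_add hp0, Real.rpow_add hp0]
    have e1 : (p:ℝ) ^ ((k:ℝ) * (-τ)) = ((p:ℝ) ^ (-τ)) ^ k := by
      rw [mul_comm, Real.rpow_mul hp0.le, Real.rpow_natCast]
    have e2 : (p:ℝ) ^ ((l:ℝ) * (-2 * σ)) = A ^ l := by
      rw [mul_comm, Real.rpow_mul hp0.le, Real.rpow_natCast, hA]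
    rw [e1, e2]
    have e3 : (p:ℝ) ^ k * ((p:ℝ) ^ (-τ)) ^ k = B ^ k := by
      rw [← mul_pow, hB]
      congr 1
      nth_rewrite 1 [← Real.rpow_one (p:ℝ)]
      rw [← Real.rpow_add hp0]
      congr 1
    calc (p:ℝ) ^ k * (((p:ℝ) ^ (-τ)) ^ k * ((p:ℝ) ^ (-2*σ) * A ^ l))
        = ((p:ℝ) ^ k * ((p:ℝ) ^ (-τ)) ^ k) * ((p:ℝ) ^ (-2*σ) * A ^ l) := by ring
      _ = B ^ k * (A * A ^ l) := by rw [e3, ← hA]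
  -- key term bound
  have hbound : ∀ kl : ℕ × ℕ, ‖F kl‖ ≤ 2 ^ M * (X + Y) * u kl := by
    rintro ⟨k, l⟩
    by_cases hcut : 2 * l + 5 ≤ k
    · have : G k (l + 1) = 0 := hG0 k (l+1) (by omega)
      simp only [hF, this, mul_zero, zero_mul, norm_zero]
      have : u (k, l) = 0 := by
        rw [hu]; simp only [if_neg (by omega : ¬ k ≤ 2 * l + 4)]; ring
      rw [this]; simp
    · have hind : u (k, l) = (1/3 : ℝ) ^ l := by
        rw [hu]; simp only [if_pos (by omega : k ≤ 2 * l + 4)]; ring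
      have h1 : ‖F (k, l)‖ ≤ 2 ^ M * ((p:ℝ) ^ k *
          ‖(p : ℂ) ^ (-(k : ℂ) * z - 2 * ((l : ℂ) + 1) * s)‖) := by
        rw [hF]
        simp only [norm_mul]
        have := mul_le_mul (mul_le_mul (ha k) (hG k (l+1)) (norm_nonneg _)
          (by positivity)) (le_refl ‖(p : ℂ) ^ (-(k : ℂ) * z - 2 * ((l : ℂ) + 1) * s)‖)
          (norm_nonneg _) (by positivity)
        calc ‖a k‖ * ‖G k (l+1)‖ * ‖(p : ℂ) ^ (-(k : ℂ) * z - 2 * ((l : ℂ) + 1) * s)‖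
            ≤ 2 ^ M * (p:ℝ) ^ k * ‖(p : ℂ) ^ (-(k : ℂ) * z - 2 * ((l : ℂ) + 1) * s)‖ := this
          _ = 2 ^ M * ((p:ℝ) ^ k * ‖(p : ℂ) ^ (-(k : ℂ) * z - 2 * ((l : ℂ) + 1) * s)‖) := by
              ring
      rw [hpow k l] at h1
      have hAl : A ^ l ≤ (1/3 : ℝ) ^ l := pow_le_pow_left₀ hA0.le hA3 l
      have h2 : B ^ k * (A * A ^ l) ≤ (X + Y) * (1/3) ^ l := by
        rcases Nat.eq_zero_or_pos k with rfl | hk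
        · simp only [pow_zero, one_mul]
          calc A * A ^ l ≤ A * (1/3) ^ l := by
                exact mul_le_mul_of_nonneg_left hAl hA0.le
            _ = X * (1/3) ^ l := by rw [hXA]
            _ ≤ (X + Y) * (1/3) ^ l := by
                have : (0:ℝ) ≤ (1/3:ℝ) ^ l := by positivity
                nlinarith
        · have hBk : B ^ k ≤ B := by
            calc B ^ k ≤ B ^ 1 := pow_le_pow_of_le_one hB0.le hB1 hk
              _ = B := pow_one B
          calc B ^ k * (A * A ^ l) ≤ B * (A * (1/3) ^ l) := by
                apply mul_le_mul hBk (mul_le_mul_of_nonneg_left hAl hA0.le)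
                  (by positivity) hB0.le
            _ = Y * (1/3) ^ l := by rw [hYAB]; ring
            _ ≤ (X + Y) * (1/3) ^ l := by
                have : (0:ℝ) ≤ (1/3:ℝ) ^ l := by positivity
                nlinarith
      rw [hind]
      calc ‖F (k, l)‖ ≤ 2 ^ M * (B ^ k * (A * A ^ l)) := h1
        _ ≤ 2 ^ M * ((X + Y) * (1/3) ^ l) := by
            apply mul_le_mul_of_nonneg_left h2 (by positivity)
        _ = 2 ^ M * (X + Y) * (1/3) ^ l := by ring
  -- summability of the majorant, via swapping coordinates
  set v : ℕ × ℕ → ℝ := fun lk => u (lk.2, lk.1) with hv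
  have hv0 : ∀ lk, 0 ≤ v lk := fun lk => hu0 _
  have hfib : ∀ l, Summable (fun k => v (l, k)) := by
    intro l
    apply summable_of_ne_finset_zero (s := Finset.range (2 * l + 5))
    intro k hk
    simp only [Finset.mem_range, not_lt] at hk
    show u (k, l) = 0
    rw [hu]
    simp only [if_neg (by omega : ¬ k ≤ 2 * l + 4)]
    ring
  have hfibsum : ∀ l, (∑' k, v (l, k)) = (2 * (l:ℝ) + 5) * (1/3) ^ l := by
    intro l
    rw [tsum_eq_sum (s := Finset.range (2 * l + 5))
      (by intro k hk
          simp only [Finset.mem_range, not_lt] at hk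
          show u (k, l) = 0
          rw [hu]
          simp only [if_neg (by omega : ¬ k ≤ 2 * l + 4)]
          ring)]
    have : ∀ k ∈ Finset.range (2 * l + 5), v (l, k) = (1/3 : ℝ) ^ l := by
      intro k hk
      simp only [Finset.mem_range] at hk
      show u (k, l) = (1/3:ℝ) ^ l
      rw [hu]
      simp only [if_pos (by omega : k ≤ 2 * l + 4)]
      ring
    rw [Finset.sum_congr rfl this, Finset.sum_const, Finset.card_range]
    push_cast
    ring
  have hgeo : Summable (fun l : ℕ => (2 * (l:ℝ) + 5) * (1/3) ^ l) := by
    have h1 : Summable (fun l : ℕ => (l:ℝ) * (1/3) ^ l) := by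
      have := summable_pow_mul_geometric_of_norm_lt_one (R := ℝ) 1 (r := 1/3)
        (by norm_num)
      simpa using this
    have h2 : Summable (fun l : ℕ => ((1:ℝ)/3) ^ l) :=
      summable_geometric_of_lt_one (by norm_num) (by norm_num)
    have := (h1.mul_left 2).add (h2.mul_left 5)
    convert this using 2 with l
    show _ = _ + _
    ring
    rfl
  have hvsum : Summable v := by
    rw [summable_prod_of_nonneg hv0]
    refine ⟨hfib, ?_⟩
    simp_rw [hfibsum]
    exact hgeo
  have husum : Summable u := by
    have : Summable (u ∘ (Equiv.prodComm ℕ ℕ)) := by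
      convert hvsum using 1
      rfl
    exact (Equiv.prodComm ℕ ℕ).summable_iff.mp this
  have hutsum : (∑' kl, u kl) = 9 := by
    have h1 : (∑' kl, u kl) = ∑' lk, v lk := by
      rw [← (Equiv.prodComm ℕ ℕ).tsum_eq u]
      congr 1
    rw [h1, hvsum.tsum_prod' hfib]
    simp_rw [hfibsum]
    have e1 : (∑' l : ℕ, (l:ℝ) * (1/3) ^ l) = 3/4 := by
      rw [tsum_coe_mul_geometric_of_norm_lt_one (r := (1/3:ℝ)) (by norm_num)]
      norm_num
    have e2 : (∑' l : ℕ, ((1:ℝ)/3) ^ l) = 3/2 := by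
      rw [tsum_geometric_of_lt_one (by norm_num) (by norm_num)]
      norm_num
    have h1' : Summable (fun l : ℕ => (l:ℝ) * (1/3) ^ l) := by
      have := summable_pow_mul_geometric_of_norm_lt_one (R := ℝ) 1 (r := 1/3)
        (by norm_num)
      simpa using this
    have h2' : Summable (fun l : ℕ => ((1:ℝ)/3) ^ l) :=
      summable_geometric_of_lt_one (by norm_num) (by norm_num)
    calc (∑' l : ℕ, (2 * (l:ℝ) + 5) * (1/3) ^ l)
        = ∑' l : ℕ, (2 * ((l:ℝ) * (1/3)^l) + 5 * ((1/3)^l)) := by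
          congr 1; funext l; ring
      _ = 2 * (∑' l : ℕ, (l:ℝ) * (1/3)^l) + 5 * (∑' l : ℕ, ((1:ℝ)/3)^l) := by
          rw [Summable.tsum_add (h1'.mul_left 2) (h2'.mul_left 5), tsum_mul_left, tsum_mul_left]
      _ = 9 := by rw [e1, e2]; norm_num
  -- assemble
  have hFsum : Summable (fun kl => ‖F kl‖) :=
    Summable.of_nonneg_of_le (fun kl => norm_nonneg _) hbound (husum.mul_left _)
  calc ‖∑' kl, F kl‖ ≤ ∑' kl, ‖F kl‖ := norm_tsum_le_tsum_norm hFsum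
    _ ≤ ∑' kl, 2 ^ M * (X + Y) * u kl := Summable.tsum_le_tsum hbound hFsum (husum.mul_left _)
    _ = 2 ^ M * (X + Y) * ∑' kl, u kl := tsum_mul_left
    _ = 2 ^ M * 9 * (X + Y) := by rw [hutsum]; ring
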